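/- Under the dominant-pole assumptions, for n → ∞ along n ∈ Λ_m = {n : n+λ ≡ m (mod σ)}, the sequence z₁^{−(n+λ−m)}·V_{n+λ}(z) converges (pointwise in z, indeed uniformly on compacts) to (z−z_{ν+1})···(z−z_λ)·ω_m(z). -/

import Mathlib

open Polynomial Finset Filter Topology

/-- Along `Λ_m = {n : n+λ ≡ m (mod σ)}`, the normalized denominators
`z₁^{-(n+λ-m)} V_{n+λ}` converge to `(z-z_{ν+1})⋯(z-z_λ)·ω_m(z)`,
pointwise and uniformly on compact sets. -/
theorem stmt5 (lam nu sig mm : ℕ) (hnu1 : 1 < nu) (hnul : nu + 1 < lam)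
    (hsig : nu ≤ sig) (hmm : mm < sig)
    (z Cc : Fin lam → ℂ) (hz : Function.Injective z)
    (hC : ∀ j, Cc j ≠ 0)
    (hmod : ∀ j : Fin lam, (j : ℕ) < nu →
      ‖z j‖ = ‖z ⟨0, by omega⟩‖)
    (hroot : ∀ j : Fin lam, (j : ℕ) < nu → z j ^ sig = z ⟨0, by omega⟩ ^ sig)
    (hdrop : ∀ j : Fin lam, nu ≤ (j : ℕ) →
      ‖z j‖ < ‖z ⟨0, by omega⟩‖) :
    let Dj : Fin lam → Polynomial ℂ :=
      fun j => ∏ i ∈ Finset.univ.erase j, (Polynomial.X - Polynomial.C (z i))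
    let V : ℕ → Polynomial ℂ := fun k => ∑ j, Polynomial.C (Cc j * z j ^ k) * Dj j
    let dom : Finset (Fin lam) := Finset.univ.filter (fun j => (j : ℕ) < nu)
    let ω : Polynomial ℂ := ∑ k ∈ dom, Polynomial.C (Cc k * z k ^ mm) *
      ∏ i ∈ dom.erase k, (Polynomial.X - Polynomial.C (z i))
    let Λ : Filter ℕ := atTop ⊓ Filter.principal {n | (n + lam) % sig = mm % sig}
    let g : ℂ → ℂ := fun w =>
      (∏ j ∈ Finset.univ.filter (fun j : Fin lam => nu ≤ (j : ℕ)), (w - z j)) * ω.eval w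
    (∀ w : ℂ, Tendsto (fun n : ℕ =>
        (z ⟨0, by omega⟩)⁻¹ ^ (n + lam - mm) * (V (n + lam)).eval w) Λ (𝓝 (g w))) ∧
    (∀ K : Set ℂ, IsCompact K → TendstoUniformlyOn (fun (n : ℕ) (w : ℂ) =>
        (z ⟨0, by omega⟩)⁻¹ ^ (n + lam - mm) * (V (n + lam)).eval w) g Λ K) := by
  intro Dj V dom ω Λ g
  have hnu_lt : nu < lam := by omega
  set z0 : ℂ := z ⟨0, by omega⟩ with hz0def
  set nd : Finset (Fin lam) := Finset.univ.filter (fun j : Fin lam => nu ≤ (j : ℕ)) with hnddef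
  have hj0nd : (⟨nu, hnu_lt⟩ : Fin lam) ∈ nd := by simp [hnddef]
  have h0pos : 0 < ‖z0‖ :=
    lt_of_le_of_lt (norm_nonneg _) (hdrop ⟨nu, hnu_lt⟩ (le_refl _))
  have hz0 : z0 ≠ 0 := norm_pos_iff.mp h0pos
  -- the algebraic identity along Λ
  have key : ∀ n ∈ {n : ℕ | (n + lam) % sig = mm % sig}, ∀ w : ℂ,
      z0⁻¹ ^ (n + lam - mm) * (V (n + lam)).eval w
        = g w + ∑ j ∈ nd, (Cc j * z j ^ mm) * (z j * z0⁻¹) ^ (n + lam - mm)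
            * (Dj j).eval w := by
    intro n hn w
    obtain ⟨t, ht⟩ : ∃ t, n + lam = mm + sig * t := by
      refine ⟨(n + lam) / sig, ?_⟩
      have h1 : (n + lam) % sig = mm := by
        simpa [Nat.mod_eq_of_lt hmm] using hn
      conv_lhs => rw [← Nat.mod_add_div (n + lam) sig, h1]
    have hNm : n + lam - mm = sig * t := by omega
    have hV : (V (n + lam)).eval w = ∑ j, Cc j * z j ^ (n + lam) * (Dj j).eval w := by
      simp [V, eval_finset_sum]
    rw [hV, Finset.mul_sum]
    rw [← Finset.sum_filter_add_sum_filter_not Finset.univ (fun j : Fin lam => (j : ℕ) < nu)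
      (fun j => z0⁻¹ ^ (n + lam - mm) * (Cc j * z j ^ (n + lam) * (Dj j).eval w))]
    have hndeq : Finset.univ.filter (fun j : Fin lam => ¬ (j : ℕ) < nu) = nd := by
      simp [hnddef, not_lt]
    rw [hndeq]
    congr 1
    · -- dominant part equals g w
      have hdomeq : ∀ j ∈ dom,
          z0⁻¹ ^ (n + lam - mm) * (Cc j * z j ^ (n + lam) * (Dj j).eval w)
            = Cc j * z j ^ mm * (Dj j).eval w := by
        intro j hj
        have hjlt : (j : ℕ) < nu := by simpa [dom] using hj
        have hzj : z j ^ (n + lam) = z j ^ mm * z0 ^ (sig * t) := by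
          rw [ht, pow_add, pow_mul, hroot j hjlt, ← pow_mul]
        have hpz : z0 ^ (sig * t) ≠ 0 := pow_ne_zero _ hz0
        rw [hNm, hzj, inv_pow]
        field_simp
      rw [Finset.sum_congr rfl hdomeq]
      -- expand g
      have hωeval : ω.eval w = ∑ k ∈ dom, Cc k * z k ^ mm *
          ∏ i ∈ dom.erase k, (w - z i) := by
        simp [ω, eval_finset_sum, eval_prod]
      show _ = (∏ j ∈ nd, (w - z j)) * ω.eval w
      rw [hωeval, Finset.mul_sum]
      refine Finset.sum_congr rfl fun j hj => ?_
      have hjlt : (j : ℕ) < nu := by simpa [dom] using hj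
      have hDval : (Dj j).eval w = ∏ i ∈ Finset.univ.erase j, (w - z i) := by
        simp [Dj, eval_prod]
      rw [hDval,
        ← Finset.prod_filter_mul_prod_filter_not (Finset.univ.erase j)
          (fun i : Fin lam => (i : ℕ) < nu) (fun i => w - z i)]
      have h1 : (Finset.univ.erase j).filter (fun i : Fin lam => (i : ℕ) < nu)
          = dom.erase j := by
        rw [Finset.filter_erase]
      have h2 : (Finset.univ.erase j).filter (fun i : Fin lam => ¬ (i : ℕ) < nu) = nd := by
        rw [Finset.filter_erase, hndeq]
        exact Finset.erase_eq_of_notMem (by simp [hnddef]; omega)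
      rw [h1, h2]
      ring
    · -- remainder part
      refine Finset.sum_congr rfl fun j hj => ?_
      have hzj : z j ^ (n + lam) = z j ^ mm * z j ^ (n + lam - mm) := by
        rw [← pow_add]
        congr 1
        omega
      rw [hzj, mul_pow, inv_pow]
      ring
  -- the remainder tends to zero uniformly on compacts
  have hU : ∀ K : Set ℂ, IsCompact K → TendstoUniformlyOn (fun (n : ℕ) (w : ℂ) =>
      z0⁻¹ ^ (n + lam - mm) * (V (n + lam)).eval w) g Λ K := by
    intro K hKc
    rw [Metric.tendstoUniformlyOn_iff]
    intro ε hε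
    -- bound for the coefficient sums on K
    have hcont : Continuous fun w : ℂ => ∑ j ∈ nd, ‖Cc j * z j ^ mm‖ * ‖(Dj j).eval w‖ :=
      continuous_finset_sum _ fun j _ => continuous_const.mul ((Dj j).continuous.norm)
    obtain ⟨M, hM⟩ := hKc.exists_bound_of_continuousOn hcont.continuousOn
    set M' : ℝ := max M 0 + 1 with hM'def
    have hM'pos : 0 < M' := by positivity
    have hEle : ∀ w ∈ K, ∑ j ∈ nd, ‖Cc j * z j ^ mm‖ * ‖(Dj j).eval w‖ ≤ M' := by
      intro w hw
      calc ∑ j ∈ nd, ‖Cc j * z j ^ mm‖ * ‖(Dj j).eval w‖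
          ≤ ‖∑ j ∈ nd, ‖Cc j * z j ^ mm‖ * ‖(Dj j).eval w‖‖ := le_abs_self _
        _ ≤ M := hM w hw
        _ ≤ M' := by rw [hM'def]; exact le_add_of_le_of_nonneg (le_max_left _ _) zero_le_one
    -- the ratio
    set r : ℝ := nd.sup' ⟨_, hj0nd⟩ (fun j => ‖z j * z0⁻¹‖) with hrdef
    have hr0 : 0 ≤ r := le_trans (norm_nonneg _) (Finset.le_sup' (fun j => ‖z j * z0⁻¹‖) hj0nd)
    have hr1 : r < 1 := by
      rw [hrdef]; refine (Finset.sup'_lt_iff _).mpr ?_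
      intro j hj
      have hjge : nu ≤ (j : ℕ) := by simpa [hnddef] using hj
      rw [norm_mul, norm_inv,
        ← div_eq_mul_inv, div_lt_one h0pos]
      exact hdrop j hjge
    have hNat : Tendsto (fun n : ℕ => n + lam - mm) atTop atTop :=
      tendsto_atTop_mono (fun n => by omega : ∀ n : ℕ, n - mm ≤ n + lam - mm)
        (tendsto_sub_atTop_nat mm)
    have htend : Tendsto (fun n : ℕ => r ^ (n + lam - mm)) Λ (𝓝 0) :=
      ((tendsto_pow_atTop_nhds_zero_of_lt_one hr0 hr1).comp hNat).mono_left inf_le_left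
    have hsmall : ∀ᶠ n in Λ, r ^ (n + lam - mm) < ε / M' :=
      htend.eventually_lt_const (by positivity)
    have hmemS : ∀ᶠ n in Λ, n ∈ {n : ℕ | (n + lam) % sig = mm % sig} :=
      mem_inf_of_right (mem_principal_self _)
    filter_upwards [hsmall, hmemS] with n hsm hn
    intro w hw
    rw [dist_eq_norm, key n hn w]
    rw [norm_sub_rev, add_sub_cancel_left]
    calc ‖∑ j ∈ nd, (Cc j * z j ^ mm) * (z j * z0⁻¹) ^ (n + lam - mm) * (Dj j).eval w‖
        ≤ ∑ j ∈ nd, ‖(Cc j * z j ^ mm) * (z j * z0⁻¹) ^ (n + lam - mm) * (Dj j).eval w‖ :=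
          norm_sum_le _ _
      _ ≤ ∑ j ∈ nd, r ^ (n + lam - mm) * (‖Cc j * z j ^ mm‖ * ‖(Dj j).eval w‖) := by
          refine Finset.sum_le_sum fun j hj => ?_
          rw [norm_mul, norm_mul, norm_pow]
          have h1 : ‖z j * z0⁻¹‖ ^ (n + lam - mm) ≤ r ^ (n + lam - mm) :=
            pow_le_pow_left₀ (norm_nonneg _) (Finset.le_sup' (fun j => ‖z j * z0⁻¹‖) hj) _
          calc ‖Cc j * z j ^ mm‖ * ‖z j * z0⁻¹‖ ^ (n + lam - mm) * ‖(Dj j).eval w‖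
              ≤ ‖Cc j * z j ^ mm‖ * r ^ (n + lam - mm) * ‖(Dj j).eval w‖ := by
                gcongr
            _ = r ^ (n + lam - mm) * (‖Cc j * z j ^ mm‖ * ‖(Dj j).eval w‖) := by ring
      _ = r ^ (n + lam - mm) * ∑ j ∈ nd, ‖Cc j * z j ^ mm‖ * ‖(Dj j).eval w‖ := by
          rw [Finset.mul_sum]
      _ ≤ r ^ (n + lam - mm) * M' := by
          have h := hEle w hw
          have h0 : (0:ℝ) ≤ r ^ (n + lam - mm) := pow_nonneg hr0 _
          exact mul_le_mul_of_nonneg_left h h0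
      _ < ε := by
          rw [← lt_div_iff₀ hM'pos]
          exact hsm
  exact ⟨fun w => (hU {w} isCompact_singleton).tendsto_at rfl, hU⟩
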